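/- Let (Ω, F, P) be a probability space with a filtration (F_t)_{t≥0}, and let (Y_t)_{t≥1} be nonnegative random variables with Y_t measurable with respect to F_t. Suppose there exist ε ∈ (0,1) and c > 0 such that for every t ≥ 1, P(|Y_t − 1| > ε | F_{t−1}) ≥ c almost surely. Let M_0 be a nonnegative F_0-measurable random variable and define M_t = M_0 ∏_{s=1}^t Y_s. If M_t converges almost surely to a random variable W as t → ∞, then W = 0 almost surely. -/

import Mathlib

open MeasureTheory ProbabilityTheory Filter
open scoped BigOperators

/-- Let `(Ω, F, P)` be a probability space with filtration `(F_t)_{t ≥ 0}`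
and let `(Y_t)_{t ≥ 1}` be nonnegative random variables, `Y_t` being `F_t`-measurable.
Suppose there are `ε ∈ (0,1)` and `c > 0` such that for every `t ≥ 1`,
`P(|Y_t − 1| > ε | F_{t-1}) ≥ c` almost surely.  Let `M_0` be a nonnegative
`F_0`-measurable random variable and `M_t = M_0 ∏_{s=1}^t Y_s`.  If `M_t` converges almost
surely to a random variable `W`, then `W = 0` almost surely. -/
theorem product_process_converges_to_zero
    {Ω : Type*} [m0 : MeasurableSpace Ω] {P : Measure Ω} [IsProbabilityMeasure P]
    (F : Filtration ℕ m0) (Y : ℕ → Ω → ℝ)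
    (hYnn : ∀ t, 1 ≤ t → ∀ ω, 0 ≤ Y t ω)
    (hYmeas : ∀ t, 1 ≤ t → Measurable[F t] (Y t))
    {ε : ℝ} (hε : ε ∈ Set.Ioo (0 : ℝ) 1) {c : ℝ} (hc : 0 < c)
    (hcond : ∀ t, 1 ≤ t → ∀ᵐ ω ∂P,
      c ≤ (P[Set.indicator {ω' | ε < |Y t ω' - 1|} (fun _ => (1 : ℝ)) | F (t - 1)]) ω)
    (M0 : Ω → ℝ) (hM0meas : Measurable[F 0] M0) (hM0nn : ∀ ω, 0 ≤ M0 ω)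
    (M : ℕ → Ω → ℝ) (hM : ∀ t ω, M t ω = M0 ω * ∏ s ∈ Finset.Icc 1 t, Y s ω)
    (W : Ω → ℝ) (hconv : ∀ᵐ ω ∂P, Tendsto (fun t => M t ω) atTop (nhds (W ω))) :
    ∀ᵐ ω ∂P, W ω = 0 := by
  classical
  -- the sequence of "bad" sets
  set s : ℕ → Set Ω := fun n => if n = 0 then ∅ else {ω' | ε < |Y n ω' - 1|} with hs_def
  have hs_meas : ∀ n, MeasurableSet[F n] (s n) := by
    intro n
    rcases Nat.eq_zero_or_pos n with h | h
    · subst h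
      have : s 0 = ∅ := by simp [hs_def]
      rw [this]
      exact @MeasurableSet.empty Ω (F 0)
    · simp only [hs_def, if_neg h.ne']
      letI : MeasurableSpace Ω := F n
      exact measurableSet_lt measurable_const (((hYmeas n h).sub measurable_const).abs)
  -- Lévy Borel–Cantelli: a.s. frequently in s n
  have hBC := MeasureTheory.ae_mem_limsup_atTop_iff (ℱ := F) P hs_meas
  have hcond' : ∀ᵐ ω ∂P, ∀ k : ℕ,
      c ≤ (P[(s (k + 1)).indicator (1 : Ω → ℝ) | F k]) ω := by
    rw [MeasureTheory.ae_all_iff]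
    intro k
    have := hcond (k + 1) (Nat.le_add_left 1 k)
    simpa [hs_def, Pi.one_def] using this
  have hfreq : ∀ᵐ ω ∂P, ∃ᶠ n in atTop, ω ∈ s n := by
    filter_upwards [hBC, hcond'] with ω hω hcω
    rw [← Filter.mem_limsup_iff_frequently_mem]
    rw [hω]
    have hmono : ∀ n : ℕ, (n : ℝ) * c ≤
        ∑ k ∈ Finset.range n, (P[(s (k + 1)).indicator (1 : Ω → ℝ) | F k]) ω := by
      intro n
      calc (n : ℝ) * c = ∑ _k ∈ Finset.range n, c := by simp [mul_comm]
        _ ≤ _ := Finset.sum_le_sum fun k _ => hcω k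
    exact tendsto_atTop_mono hmono
      (Tendsto.atTop_mul_const hc tendsto_natCast_atTop_atTop)
  filter_upwards [hconv, hfreq] with ω hω hfω
  by_contra hW
  -- W ω ≥ 0 since M t ω ≥ 0
  have hMnn : ∀ t, 0 ≤ M t ω := by
    intro t
    rw [hM]
    exact mul_nonneg (hM0nn ω) (Finset.prod_nonneg fun i hi =>
      hYnn i (Finset.mem_Icc.mp hi).1 ω)
  have hWnn : 0 ≤ W ω := le_of_tendsto_of_tendsto tendsto_const_nhds hω
    (Filter.Eventually.of_forall hMnn)
  have hWpos : 0 < W ω := lt_of_le_of_ne hWnn (Ne.symm hW)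
  -- Y (t+1) ω = M (t+1) ω / M t ω → 1
  have hrec : ∀ t : ℕ, M (t + 1) ω = M t ω * Y (t + 1) ω := by
    intro t
    rw [hM, hM, Finset.prod_Icc_succ_top (Nat.le_add_left 1 t), mul_assoc]
  have hYtend : Tendsto (fun t : ℕ => Y (t + 1) ω) atTop (nhds 1) := by
    have h1 : Tendsto (fun t : ℕ => M (t + 1) ω) atTop (nhds (W ω)) :=
      hω.comp (tendsto_add_atTop_nat 1)
    have h2 : Tendsto (fun t : ℕ => M (t + 1) ω / M t ω) atTop (nhds (W ω / W ω)) :=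
      h1.div hω hWpos.ne'
    rw [div_self hWpos.ne'] at h2
    refine h2.congr' ?_
    have hMpos : ∀ᶠ t in atTop, 0 < M t ω :=
      hω.eventually (eventually_gt_nhds hWpos)
    filter_upwards [hMpos] with t ht
    rw [hrec t, mul_div_assoc] at *
    field_simp
  -- eventually |Y t ω - 1| ≤ ε
  have hev : ∀ᶠ t in atTop, ω ∉ s t := by
    have : ∀ᶠ t : ℕ in atTop, |Y (t + 1) ω - 1| < ε := by
      have := hYtend.sub tendsto_const_nhds (g := fun _ => (1:ℝ))
      simp only [sub_self] at this
      have habs : Tendsto (fun t : ℕ => |Y (t + 1) ω - 1|) atTop (nhds 0) := by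
        simpa using this.abs
      exact habs.eventually (eventually_lt_nhds hε.1)
    rw [eventually_atTop] at this ⊢
    obtain ⟨N, hN⟩ := this
    refine ⟨N + 1, fun t ht => ?_⟩
    obtain ⟨u, rfl⟩ : ∃ u, t = u + 1 := ⟨t - 1, by omega⟩
    have h2 := hN u (by omega)
    simp only [hs_def, if_neg (Nat.succ_ne_zero u), Set.mem_setOf_eq]
    exact not_lt.mpr h2.le
  obtain ⟨t, h1, h2⟩ := (hfω.and_eventually hev).exists
  exact h2 h1
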